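/- Let A be a unital C*-algebra, let 0 ≤ γ < 1, and let b ∈ A satisfy ‖b*b − 1‖ ≤ γ and ‖bb* − 1‖ ≤ γ. Then b and b*b are invertible, the element u = b·(b*b)^{−1/2} is unitary, and ‖b − u‖ ≤ √(1+γ)·(1/√(1−γ) − 1). -/

import Mathlib

lemma aux_real (γ x : ℝ) (h0 : 0 ≤ γ) (h1 : γ < 1) (hx1 : 1 - γ ≤ x) (hx2 : x ≤ 1 + γ) :
    |1 - (Real.sqrt x)⁻¹| ≤ 1 / Real.sqrt (1 - γ) - 1 := by
  set p := Real.sqrt (1 - γ) with hp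
  set q := Real.sqrt (1 + γ) with hq
  set s := Real.sqrt x with hs
  have hp0 : 0 < p := Real.sqrt_pos.mpr (by linarith)
  have hps : p ≤ s := Real.sqrt_le_sqrt hx1
  have hsq : s ≤ q := Real.sqrt_le_sqrt hx2
  have hs0 : 0 < s := lt_of_lt_of_le hp0 hps
  have hq0 : 0 < q := lt_of_lt_of_le hs0 hsq
  have hpq : p * q ≤ 1 := by
    rw [hp, hq, ← Real.sqrt_mul (by linarith)]
    rw [show (1 - γ) * (1 + γ) = 1 - γ^2 by ring]
    calc Real.sqrt (1 - γ^2) ≤ Real.sqrt 1 := Real.sqrt_le_sqrt (by nlinarith)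
    _ = 1 := Real.sqrt_one
  rw [abs_le]
  constructor
  · have : s⁻¹ ≤ p⁻¹ := by
      rw [inv_le_inv₀ hs0 hp0]; exact hps
    rw [one_div]; linarith
  · -- 1 - s⁻¹ ≤ 1/p - 1, i.e. 2 ≤ 1/p + 1/s
    have hqinv : q⁻¹ ≤ s⁻¹ := by rw [inv_le_inv₀ hq0 hs0]; exact hsq
    have key : 2 ≤ p⁻¹ + q⁻¹ := by
      rw [inv_add_inv (ne_of_gt hp0) (ne_of_gt hq0), le_div_iff₀ (by positivity)]
      nlinarith [sq_nonneg (p - q), sq_nonneg (p*q), mul_pos hp0 hq0]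
    rw [one_div]; linarith

lemma aux_isUnit {R : Type*} [NormedRing R] [CompleteSpace R] (a : R) (h : ‖a - 1‖ < 1) :
    IsUnit a := by
  have h' : ‖1 - a‖ < 1 := by rwa [norm_sub_rev] at h
  exact sub_sub_self 1 a ▸ (Units.oneSub (1 - a) h').isUnit

theorem stmt7 {A : Type*} [CStarAlgebra A] [PartialOrder A] [StarOrderedRing A]
    (γ : ℝ) (hγ0 : 0 ≤ γ) (hγ1 : γ < 1) (b : A)
    (h1 : ‖star b * b - 1‖ ≤ γ) (h2 : ‖b * star b - 1‖ ≤ γ) :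
    IsUnit b ∧ IsUnit (star b * b) ∧
      b * cfc (fun t : ℝ => (Real.sqrt t)⁻¹) (star b * b) ∈ unitary A ∧
      ‖b - b * cfc (fun t : ℝ => (Real.sqrt t)⁻¹) (star b * b)‖ ≤
        Real.sqrt (1 + γ) * (1 / Real.sqrt (1 - γ) - 1) := by
  have hsub : 0 ≤ 1 / Real.sqrt (1 - γ) - 1 := by
    have h01 : 0 < Real.sqrt (1 - γ) := Real.sqrt_pos.mpr (by linarith)
    have h02 : Real.sqrt (1 - γ) ≤ 1 := Real.sqrt_le_one.mpr (by linarith)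
    have := one_le_one_div h01 h02
    linarith
  have hrhs : 0 ≤ Real.sqrt (1 + γ) * (1 / Real.sqrt (1 - γ) - 1) :=
    mul_nonneg (Real.sqrt_nonneg _) hsub
  rcases subsingleton_or_nontrivial A with hA | hA
  · refine ⟨isUnit_of_subsingleton b, isUnit_of_subsingleton _, ?_, ?_⟩
    · rw [Unitary.mem_iff]
      exact ⟨Subsingleton.elim _ _, Subsingleton.elim _ _⟩
    · rw [Subsingleton.elim (b - b * cfc (fun t : ℝ => (Real.sqrt t)⁻¹) (star b * b)) 0,
        norm_zero]
      exact hrhs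
  set a := star b * b with ha
  have hsa : IsSelfAdjoint a := IsSelfAdjoint.star_mul_self b
  have hspec : ∀ x ∈ spectrum ℝ a, 1 - γ ≤ x ∧ x ≤ 1 + γ := by
    intro x hx
    have hmem : x - 1 ∈ spectrum ℝ (a - algebraMap ℝ A 1) := by
      rw [← spectrum.sub_singleton_eq]
      exact Set.sub_mem_sub hx rfl
    have hb : ‖x - 1‖ ≤ ‖a - (1:A)‖ := by
      have := spectrum.norm_le_norm_of_mem hmem
      simpa using this
    rw [Real.norm_eq_abs] at hb
    have habs := abs_le.mp (hb.trans h1)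
    exact ⟨by linarith [habs.1], by linarith [habs.2]⟩
  have hpos : ∀ x ∈ spectrum ℝ a, 0 < x := fun x hx => by linarith [(hspec x hx).1]
  have hf : ContinuousOn (fun t : ℝ => (Real.sqrt t)⁻¹) (spectrum ℝ a) :=
    ContinuousOn.inv₀ Real.continuous_sqrt.continuousOn
      (fun x hx => (Real.sqrt_pos.mpr (hpos x hx)).ne')
  have ha_unit : IsUnit a := aux_isUnit a (lt_of_le_of_lt h1 hγ1)
  have hbb_unit : IsUnit (b * star b) := aux_isUnit _ (lt_of_le_of_lt h2 hγ1)
  have hb_unit : IsUnit b := by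
    obtain ⟨u, hu⟩ := ha_unit
    obtain ⟨v, hv⟩ := hbb_unit
    have hr : b * (star b * ↑v⁻¹) = 1 := by
      rw [← mul_assoc, ← hv, Units.mul_inv]
    have hl : (↑u⁻¹ * star b) * b = 1 := by
      rw [mul_assoc, ← ha, ← hu, Units.inv_mul]
    have heq : star b * ↑v⁻¹ = ↑u⁻¹ * star b := by
      calc star b * ↑v⁻¹ = 1 * (star b * ↑v⁻¹) := (one_mul _).symm
        _ = ((↑u⁻¹ * star b) * b) * (star b * ↑v⁻¹) := by rw [hl]
        _ = (↑u⁻¹ * star b) * (b * (star b * ↑v⁻¹)) := by simp [mul_assoc]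
        _ = ↑u⁻¹ * star b := by rw [hr, mul_one]
    exact isUnit_iff_exists.mpr ⟨star b * ↑v⁻¹, hr, heq ▸ hl⟩
  set f : ℝ → ℝ := fun t => (Real.sqrt t)⁻¹ with hfdef
  set c := cfc f a with hc
  have hc_sa : IsSelfAdjoint c := cfc_predicate f a
  have hcs : star c = c := hc_sa
  have hca : c * a * c = 1 := by
    conv_lhs => rw [← cfc_id ℝ a hsa]
    rw [hc, ← cfc_mul f id a hf, ← cfc_mul _ f a]
    rw [← cfc_one ℝ a hsa]
    apply cfc_congr
    intro x hx
    have hx0 := hpos x hx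
    simp only [id_eq, Pi.one_apply, hfdef]
    have hsx : Real.sqrt x * Real.sqrt x = x := Real.mul_self_sqrt hx0.le
    have hs0 : Real.sqrt x ≠ 0 := (Real.sqrt_pos.mpr hx0).ne'
    field_simp
    rw [sq, hsx]
  have hstar_uu : star (b * c) * (b * c) = 1 := by
    rw [star_mul, hcs, mul_assoc, ← mul_assoc (star b) b c, ← ha, ← mul_assoc]
    exact hca
  have hu_unit : IsUnit (b * c) := hb_unit.mul (isUnit_cfc f a hf hsa (by
    intro x hx
    simp only [hfdef]
    exact inv_ne_zero (Real.sqrt_pos.mpr (hpos x hx)).ne'))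
  have hmem : b * c ∈ unitary A := by
    rw [Unitary.mem_iff]
    refine ⟨hstar_uu, ?_⟩
    obtain ⟨w, hw⟩ := hu_unit
    have hinv : star (b * c) = ↑w⁻¹ := by
      calc star (b * c) = star (b * c) * (↑w * ↑w⁻¹) := by rw [Units.mul_inv, mul_one]
        _ = (star (b * c) * (b * c)) * ↑w⁻¹ := by rw [hw]; simp [mul_assoc]
        _ = ↑w⁻¹ := by rw [hstar_uu, one_mul]
    rw [hinv, ← hw, Units.mul_inv]
  have hb_norm : ‖b‖ ≤ Real.sqrt (1 + γ) := by
    have h1' : ‖a‖ ≤ 1 + γ := by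
      calc ‖a‖ = ‖(a - 1) + 1‖ := by rw [sub_add_cancel]
        _ ≤ ‖a - 1‖ + ‖(1:A)‖ := norm_add_le _ _
        _ ≤ γ + 1 := by rw [norm_one]; linarith
        _ = 1 + γ := by ring
    have hbb : ‖b‖ * ‖b‖ = ‖a‖ := (CStarRing.norm_star_mul_self).symm
    rw [show (1 + γ : ℝ) = Real.sqrt (1 + γ) * Real.sqrt (1 + γ) from
      (Real.mul_self_sqrt (by linarith)).symm] at h1'
    nlinarith [norm_nonneg b, Real.sqrt_nonneg (1 + γ)]
  have hg_norm : ‖(1:A) - c‖ ≤ 1 / Real.sqrt (1 - γ) - 1 := by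
    have h1c : (1:A) - c = cfc (fun x : ℝ => 1 - f x) a := by
      rw [cfc_sub _ _ a (by fun_prop) hf, cfc_const_one ℝ a]
    rw [h1c]
    refine norm_cfc_le hsub ?_
    intro x hx
    rw [Real.norm_eq_abs]
    exact aux_real γ x hγ0 hγ1 (hspec x hx).1 (hspec x hx).2
  have hfinal : ‖b - b * c‖ ≤ Real.sqrt (1 + γ) * (1 / Real.sqrt (1 - γ) - 1) := by
    rw [show b - b * c = b * (1 - c) by noncomm_ring]
    calc ‖b * (1 - c)‖ ≤ ‖b‖ * ‖(1:A) - c‖ := norm_mul_le _ _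
      _ ≤ Real.sqrt (1 + γ) * (1 / Real.sqrt (1 - γ) - 1) :=
        mul_le_mul hb_norm hg_norm (norm_nonneg _) (Real.sqrt_nonneg _)
  exact ⟨hb_unit, ha_unit, hmem, hfinal⟩
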